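/- Let k, s ≥ 2 be integers, and let n be a positive integer and p ∈ [0,1] be such that max{ n²·p^s, n·(1−p⁴)^{(k²−3k−2)/4}, exp(−C(n,2)·p/4) } ≤ 1/2, where C(n,2) = n(n−1)/2. Then there exists an n-vertex finite simple graph G with average degree d(G) ≥ (n−1)·p/2 such that G is K_{s,s}-free and every induced subgraph G' of G which is C_4-free has average degree d(G') < k. -/

import Mathlib

open SimpleGraph

/-- The average degree of a graph: `2 e(G) / |V(G)|`. -/
noncomputable def avgDeg {V : Type*} (G : SimpleGraph V) : ℝ :=
  2 * (G.edgeSet.ncard : ℝ) / (Nat.card V : ℝ)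

/-- The maximum degree of a graph on a finite vertex type. -/
noncomputable def maxDeg {V : Type*} [Fintype V] (G : SimpleGraph V) : ℕ :=
  Finset.univ.sup fun v => (G.neighborSet v).ncard

/-- `G` contains no (not necessarily induced) copy of the complete bipartite graph `K_{s,s}`. -/
def KssFree {V : Type*} (G : SimpleGraph V) (s : ℕ) : Prop :=
  ¬ ∃ S T : Finset V, Disjoint S T ∧ S.card = s ∧ T.card = s ∧
      ∀ a ∈ S, ∀ b ∈ T, G.Adj a b

/-- `G` contains no (not necessarily induced) copy of the four-cycle `C₄`:
no two distinct vertices have two distinct common neighbours. -/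
def C4Free {V : Type*} (G : SimpleGraph V) : Prop :=
  ¬ ∃ a b c d : V, a ≠ b ∧ c ≠ d ∧ G.Adj a c ∧ G.Adj b c ∧ G.Adj a d ∧ G.Adj b d

/-- `G` contains no triangle. -/
def C3Free {V : Type*} (G : SimpleGraph V) : Prop :=
  ¬ ∃ a b c : V, G.Adj a b ∧ G.Adj b c ∧ G.Adj a c

/-- `G` is bipartite: the vertex set can be split into two independent sets. -/
def IsBipartite {V : Type*} (G : SimpleGraph V) : Prop :=
  ∃ f : V → Bool, ∀ ⦃a b : V⦄, G.Adj a b → f a ≠ f b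

/-- `G` is `d`-degenerate: every nonempty (induced) subgraph has a vertex of degree at most `d`. -/
def IsDegenerate {V : Type*} (G : SimpleGraph V) (d : ℝ) : Prop :=
  ∀ S : Finset V, S.Nonempty → ∃ v ∈ S, ((G.neighborSet v ∩ ↑S).ncard : ℝ) ≤ d

/-- The number of edges of `G` with one endpoint in `A` and one in `B`. -/
noncomputable def eBetween {V : Type*} (G : SimpleGraph V) (A B : Set V) : ℕ :=
  {e : Sym2 V | e ∈ G.edgeSet ∧ ∃ a ∈ A, ∃ b ∈ B, e = s(a, b)}.ncard

open Real Finset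



lemma log_ge_div {x : ℝ} (hx : 0 < 1 + x) : x / (1 + x) ≤ Real.log (1 + x) := by
  have h := Real.log_le_sub_one_of_pos (x := (1+x)⁻¹) (by positivity)
  rw [Real.log_inv] at h
  have : (1+x)⁻¹ - 1 = -(x/(1+x)) := by field_simp; ring
  rw [this] at h
  linarith

lemma log_le_div_e {y : ℝ} (hy : 0 < y) : Real.log y ≤ y / Real.exp 1 := by
  have h := Real.log_le_sub_one_of_pos (x := y / Real.exp 1) (by positivity)
  rw [Real.log_div (ne_of_gt hy) (by positivity), Real.log_exp] at h
  linarith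

lemma log_ge_mul_log2 {p : ℝ} (hp0 : 0 ≤ p) (hp1 : p ≤ 1) :
    p * Real.log 2 ≤ Real.log (1 + p) := by
  have hc := convexOn_exp.2 (Set.mem_univ (0:ℝ)) (Set.mem_univ (Real.log 2))
    (by linarith : (0:ℝ) ≤ 1 - p) hp0 (by ring)
  simp only [smul_eq_mul, mul_zero, zero_add, Real.exp_zero, Real.exp_log (by norm_num : (0:ℝ) < 2)] at hc
  have h2 : Real.exp (p * Real.log 2) ≤ 1 + p := by
    calc Real.exp (p * Real.log 2) ≤ (1-p) * 1 + p * 2 := hc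
    _ = 1 + p := by ring
  calc p * Real.log 2 = Real.log (Real.exp (p * Real.log 2)) := (Real.log_exp _).symm
  _ ≤ Real.log (1 + p) := Real.log_le_log (Real.exp_pos _) h2


set_option maxHeartbeats 1000000 in
lemma FC {x p : ℝ} (hx0 : 0 < x) (hx3 : x ≤ 1/3) (hpx : Real.exp 1 * x ≤ p)
    (hp1 : p < 1) :
    x * Real.log (p / x) ≤ (1 - x) * (Real.log (1 + p) + Real.log (1 + p ^ 2) + Real.log (1 - x)) := by
  have he1 : (2.71828 : ℝ) < Real.exp 1 := by
    have := Real.exp_one_gt_d9; linarith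
  have hp0 : 0 < p := lt_of_lt_of_le (by positivity) hpx
  have h1x : (0:ℝ) < 1 - x := by linarith
  set u := p / Real.exp 1 with hu
  have hu0 : 0 ≤ u := by positivity
  have hxp : x ≤ u := by
    rw [hu, le_div_iff₀ (by positivity)]; linarith [hpx]
  have hu1 : u ≤ 0.36788 * p := by
    have hpe : u ≤ p / 2.71828 :=
      div_le_div_of_nonneg_left hp0.le (by norm_num) he1.le
    have : p / 2.71828 ≤ 0.36788 * p := by
      rw [div_le_iff₀ (by norm_num)]; nlinarith [hp0.le]
    linarith
  have hule : u ≤ 0.36788 := by nlinarith [hp1.le, hp0.le]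
  have hlx : -x ≤ (1 - x) * Real.log (1 - x) := by
    have h := log_ge_div (x := -x) (by linarith)
    have e1 : 1 + -x = 1 - x := by ring
    rw [e1] at h
    have h2 := mul_le_mul_of_nonneg_left h h1x.le
    have e2 : (1 - x) * (-x / (1 - x)) = -x := by
      field_simp
    linarith [e2 ▸ h2]
  have hlog1 : x * Real.log (p / x) ≤ u := by
    have h := log_le_div_e (y := p / x) (by positivity)
    have h2 := mul_le_mul_of_nonneg_left h hx0.le
    have e2 : x * (p / x / Real.exp 1) = u := by
      rw [hu]; field_simp
    linarith [e2 ▸ h2]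
  obtain ⟨C, hC0, hstep, hCle⟩ :
      ∃ C : ℝ, 0 ≤ C ∧ 2 * u ≤ (1 - u) * C ∧ C ≤ Real.log (1+p) + Real.log (1+p^2) := by
    rcases le_or_gt p 0.7 with hc | hc
    · refine ⟨p / (1+p) + p^2/(1+p^2), by positivity, ?_, ?_⟩
      · have h3 : p ≤ p / (1+p) + p^2/(1+p^2) := by
          rw [div_add_div _ _ (by positivity) (by positivity), le_div_iff₀ (by positivity)]
          nlinarith [mul_nonneg (mul_nonneg (mul_nonneg hp0.le hp0.le) hp0.le)
            (by linarith : (0:ℝ) ≤ 1 - p)]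
        have hS0 : (0:ℝ) ≤ p / (1+p) + p^2/(1+p^2) := by positivity
        have h4 : (1 - u) * p ≤ (1 - u) * (p / (1+p) + p^2/(1+p^2)) := by
          apply mul_le_mul_of_nonneg_left h3; linarith
        have h5 : 2 * u ≤ (1 - u) * p := by
          nlinarith [mul_le_mul_of_nonneg_right hu1 hp0.le,
            mul_le_mul_of_nonneg_right hc hp0.le]
        linarith
      · have h1 : p / (1 + p) ≤ Real.log (1 + p) := log_ge_div (by linarith)
        have h2 : p^2 / (1 + p^2) ≤ Real.log (1 + p^2) := log_ge_div (by positivity)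
        linarith
    · have hl2 : (0.69314 : ℝ) < Real.log 2 := by
        have := Real.log_two_gt_d9; linarith
      refine ⟨(p + p^2) * Real.log 2, by positivity, ?_, ?_⟩
      · have hkey : 0.73576 * p ≤ (1 - u) * ((p + p^2) * Real.log 2) := by
          have hfac : (1 - 0.36788*p) * (1 + p) * 0.69314 ≥ 0.73576 := by
            nlinarith [mul_nonneg (by linarith : (0:ℝ) ≤ p - 0.7) (by linarith : (0:ℝ) ≤ 1 - p)]
          have h1u : (1:ℝ) - u ≥ 1 - 0.36788*p := by linarith
          have hgg : (1 - u) * ((1 + p) * Real.log 2) ≥ (1 - 0.36788*p) * ((1+p) * 0.69314) := by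
            apply mul_le_mul h1u ?_ (by positivity) ?_
            · apply mul_le_mul_of_nonneg_left hl2.le (by linarith)
            · nlinarith [hu1, hp1.le, hp0.le]
          have e1 : (1 - u) * ((p + p^2) * Real.log 2) = ((1 - u) * ((1+p) * Real.log 2)) * p := by ring
          rw [e1]
          calc (0.73576:ℝ) * p ≤ ((1 - 0.36788*p) * ((1+p) * 0.69314)) * p := by
                nlinarith [hfac, hp0.le]
          _ ≤ ((1 - u) * ((1+p) * Real.log 2)) * p := by
                apply mul_le_mul_of_nonneg_right hgg hp0.le
        have h2u : 2 * u ≤ 0.73576 * p := by linarith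
        linarith
      · have h1 : p * Real.log 2 ≤ Real.log (1 + p) := log_ge_mul_log2 hp0.le hp1.le
        have h2 : p^2 * Real.log 2 ≤ Real.log (1 + p^2) := log_ge_mul_log2 (by positivity) (by nlinarith)
        linarith
  -- assemble
  have hmono : (1 - u) * C - u ≤ (1 - x) * C - x := by
    have : (1 - u) * C ≤ (1 - x) * C := by
      apply mul_le_mul_of_nonneg_right (by linarith) hC0
    linarith
  have hAB : (1-x) * C ≤ (1-x) * (Real.log (1+p) + Real.log (1+p^2)) :=
    mul_le_mul_of_nonneg_left hCle h1x.le
  have expand : (1 - x) * (Real.log (1 + p) + Real.log (1 + p ^ 2) + Real.log (1 - x))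
      = (1-x) * (Real.log (1+p) + Real.log (1+p^2)) + (1-x) * Real.log (1-x) := by ring
  rw [expand]
  linarith


set_option maxHeartbeats 1000000 in
lemma pmin {k n : ℕ} {p : ℝ} (hk : 4 ≤ k) (hn : 2 ≤ n) (hp0 : 0 ≤ p) (hp1 : p < 1)
    (h2 : (n : ℝ) * (1 - p ^ 4) ^ (((k : ℝ) ^ 2 - 3 * k - 2) / 4) ≤ 1/2) :
    Real.exp 1 * (1 / ((k:ℝ) - 1)) ≤ p := by
  have hK : (4:ℝ) ≤ (k:ℝ) := by exact_mod_cast hk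
  set K := (k:ℝ)
  set Q : ℝ := (K^2 - 3*K - 2)/4 with hQdef
  have hQ : (1:ℝ)/2 ≤ Q := by rw [hQdef]; nlinarith
  have hQ0 : (0:ℝ) < Q := by linarith
  have hB1 : p^4 < 1 := by nlinarith [pow_lt_one₀ hp0 hp1 (by norm_num : 4 ≠ 0)]
  have hB0 : (0:ℝ) < 1 - p^4 := by linarith
  have hBQ : (1 - p^4) ^ (Q:ℝ) ≤ 1/4 := by
    have hpos : (0:ℝ) ≤ (1 - p^4) ^ (Q:ℝ) := Real.rpow_nonneg hB0.le _
    have hn2 : (2:ℝ) ≤ (n:ℝ) := by exact_mod_cast hn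
    nlinarith [h2, mul_le_mul_of_nonneg_right hn2 hpos]
  -- B ≤ exp (-z), z = log 4 / Q
  set z : ℝ := Real.log 4 / Q with hz
  have hlog4 : Real.log 4 = 2 * Real.log 2 := by
    rw [show (4:ℝ) = 2^2 by norm_num, Real.log_pow]; push_cast; ring
  have hl2a := Real.log_two_gt_d9
  have hl2b := Real.log_two_lt_d9
  have hz0 : 0 < z := by
    apply div_pos _ hQ0
    rw [hlog4]; linarith
  have hBz : 1 - p^4 ≤ Real.exp (-z) := by
    have h1 : ((1 - p^4) ^ (Q:ℝ)) ^ (1/Q : ℝ) ≤ ((1:ℝ)/4) ^ (1/Q : ℝ) :=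
      Real.rpow_le_rpow (Real.rpow_nonneg hB0.le _) hBQ (by positivity)
    rw [← Real.rpow_mul hB0.le] at h1
    rw [mul_one_div, div_self hQ0.ne', Real.rpow_one] at h1
    have h2' : ((1:ℝ)/4) ^ (1/Q : ℝ) = Real.exp (-z) := by
      rw [Real.rpow_def_of_pos (by norm_num : (0:ℝ) < 1/4)]
      congr 1
      rw [show Real.log (1/4) = - Real.log 4 by rw [Real.log_div one_ne_zero (by norm_num)]; simp]
      rw [hz]; ring
    rw [h2'] at h1
    exact h1
  have hexpz : Real.exp (-z) ≤ 1/(1+z) := by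
    have h := Real.add_one_le_exp z
    rw [Real.exp_neg]
    rw [div_eq_inv_mul, mul_one]
    exact inv_anti₀ (by linarith) (by linarith)
  have hp4 : z/(1+z) ≤ p^4 := by
    have h1z : (0:ℝ) < 1 + z := by linarith
    have hthis : (1 - p^4) * (1+z) ≤ 1 := by
      have hh := le_trans hBz hexpz
      rw [le_div_iff₀ h1z] at hh; linarith
    rw [div_le_iff₀ h1z]
    nlinarith [hthis]
  -- z/(1+z) = log4/(Q + log4)
  have hzz : z/(1+z) = Real.log 4 / (Q + Real.log 4) := by
    rw [hz]; field_simp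
  have hQl4 : (0:ℝ) < Q + Real.log 4 := by rw [hlog4]; linarith
  have hKm1 : (0:ℝ) < K - 1 := by linarith
  have he4 : Real.exp 1 ^ 4 ≤ 54.599 := by
    have he := Real.exp_one_lt_d9
    have h4 := pow_le_pow_left₀ (Real.exp_pos 1).le he.le 4
    calc Real.exp 1 ^ 4 ≤ 2.7182818286^4 := h4
    _ ≤ 54.599 := by norm_num
  have hkey : (Real.exp 1)^4 * (Q + Real.log 4) ≤ Real.log 4 * (K-1)^4 := by
    have hl4a : (1.3862943:ℝ) ≤ Real.log 4 := by rw [hlog4]; linarith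
    have hl4b : Real.log 4 ≤ 1.3862944 := by rw [hlog4]; linarith
    have hQub : Q = (K^2-3*K-2)/4 := hQdef
    have he40 : (0:ℝ) ≤ Real.exp 1 ^ 4 := by positivity
    nlinarith [sq_nonneg ((K-1)^2 - 9), sq_nonneg (K-4), hK,
      mul_nonneg (sub_nonneg.2 hK) (sub_nonneg.2 hK),
      mul_le_mul_of_nonneg_right he4 (le_trans (by norm_num) hl4a),
      sq_nonneg (K-1), mul_nonneg (mul_nonneg (sub_nonneg.2 hK) (sub_nonneg.2 hK)) (sub_nonneg.2 hK)]
  have hfinal4 : (Real.exp 1 * (1/(K-1)))^4 ≤ p^4 := by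
    have e1 : (Real.exp 1 * (1/(K-1)))^4 = (Real.exp 1)^4 / (K-1)^4 := by
      rw [mul_pow]; rw [div_pow]; ring
    rw [e1]
    have h2' : (Real.exp 1)^4 / (K-1)^4 ≤ Real.log 4/(Q + Real.log 4) := by
      rw [div_le_div_iff₀ (by positivity) hQl4]
      linarith [hkey]
    calc (Real.exp 1)^4 / (K-1)^4 ≤ Real.log 4/(Q + Real.log 4) := h2'
    _ = z/(1+z) := hzz.symm
    _ ≤ p^4 := hp4
  by_contra hcon
  push_neg at hcon
  have h0ex : (0:ℝ) ≤ Real.exp 1 * (1/(K-1)) := by positivity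
  have := pow_lt_pow_left₀ hcon hp0 (by norm_num : 4 ≠ 0)
  linarith


variable {α : Type*} [DecidableEq α]

/-- weight of a subset -/
noncomputable def wt (U : Finset α) (p : ℝ) (E : Finset α) : ℝ :=
  p ^ E.card * (1 - p) ^ (U.card - E.card)

lemma gen_id (U B : Finset α) (hB : B ⊆ U) (p t : ℝ) :
    ∑ E ∈ U.powerset, wt U p E * t ^ (E ∩ B).card = (p * t + (1 - p)) ^ B.card := by
  have h := Finset.prod_add (fun i => if i ∈ B then p * t else p) (fun _ => (1 : ℝ) - p) U
  have hL : ∏ i ∈ U, ((if i ∈ B then p * t else p) + (1 - p)) = (p * t + (1 - p)) ^ B.card := by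
    rw [Finset.prod_congr rfl (g := fun i => if i ∈ B then (p*t + (1-p)) else 1)
      (fun i _ => by by_cases hi : i ∈ B <;> simp [hi] <;> ring)]
    rw [Finset.prod_ite]
    rw [Finset.filter_mem_eq_inter, (Finset.inter_eq_right).2 hB]
    simp [Finset.prod_const]
  have hR : ∀ E ∈ U.powerset,
      (∏ i ∈ E, (if i ∈ B then p * t else p)) * ∏ _i ∈ U \ E, ((1:ℝ) - p)
        = wt U p E * t ^ (E ∩ B).card := by
    intro E hE
    rw [Finset.mem_powerset] at hE
    rw [Finset.prod_ite]
    rw [Finset.filter_mem_eq_inter]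
    rw [Finset.prod_const, Finset.prod_const, Finset.prod_const]
    rw [Finset.card_sdiff_of_subset hE]
    have hsplit : (E.filter (fun i => i ∉ B)).card = E.card - (E ∩ B).card := by
      rw [← Finset.filter_mem_eq_inter]
      rw [← Finset.card_filter_add_card_filter_not (s := E) (p := fun i => i ∈ B)]
      omega
    rw [hsplit]
    have hle : (E ∩ B).card ≤ E.card := Finset.card_le_card (Finset.inter_subset_left)
    unfold wt
    rw [mul_pow]
    have : p ^ E.card = p ^ (E ∩ B).card * p ^ (E.card - (E ∩ B).card) := by
      rw [← pow_add]; congr 1; omega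
    rw [this]; ring
  rw [h] at hL
  rw [← hL]
  exact Finset.sum_congr rfl fun E hE => (hR E hE).symm

lemma sum_wt (U : Finset α) (p : ℝ) : ∑ E ∈ U.powerset, wt U p E = 1 := by
  have h := gen_id U ∅ (Finset.empty_subset _) p 1
  simpa using h

lemma wt_nonneg {U : Finset α} {p : ℝ} (hp0 : 0 ≤ p) (hp1 : p ≤ 1) (E : Finset α) :
    0 ≤ wt U p E := by
  unfold wt
  have : (0:ℝ) ≤ 1 - p := by linarith
  positivity

lemma sum_wt_superset (U F : Finset α) (hF : F ⊆ U) (p : ℝ) [DecidablePred (fun E => F ⊆ E)] :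
    ∑ E ∈ U.powerset.filter (fun E => F ⊆ E), wt U p E = p ^ F.card := by
  have h := Finset.prod_add (fun _ => p) (fun i => if i ∈ F then (0:ℝ) else (1 - p)) U
  have hL : ∏ i ∈ U, (p + (if i ∈ F then (0:ℝ) else (1 - p))) = p ^ F.card := by
    rw [Finset.prod_congr rfl (g := fun i => if i ∈ F then p else 1)
      (fun i _ => by by_cases hi : i ∈ F <;> simp [hi] <;> ring)]
    rw [Finset.prod_ite]
    rw [Finset.filter_mem_eq_inter, (Finset.inter_eq_right).2 hF]
    simp [Finset.prod_const]
  have hR : ∀ E ∈ U.powerset,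
      (∏ _i ∈ E, p) * ∏ i ∈ U \ E, (if i ∈ F then (0:ℝ) else (1 - p))
        = if F ⊆ E then wt U p E else 0 := by
    intro E hE
    rw [Finset.mem_powerset] at hE
    by_cases hFE : F ⊆ E
    · rw [if_pos hFE]
      have : ∀ i ∈ U \ E, (if i ∈ F then (0:ℝ) else (1-p)) = (1-p) := by
        intro i hi
        rw [Finset.mem_sdiff] at hi
        rw [if_neg (fun hiF => hi.2 (hFE hiF))]
      rw [Finset.prod_congr rfl this, Finset.prod_const, Finset.prod_const,
        Finset.card_sdiff_of_subset hE]
      rfl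
    · rw [if_neg hFE]
      obtain ⟨i, hiF, hiE⟩ := Finset.not_subset.1 hFE
      have hiU : i ∈ U \ E := Finset.mem_sdiff.2 ⟨hF hiF, hiE⟩
      rw [Finset.prod_eq_zero hiU (by rw [if_pos hiF])]
      ring
  rw [h] at hL
  rw [← hL, Finset.sum_filter]
  exact (Finset.sum_congr rfl hR).symm

lemma tail_bound (U B : Finset α) (hB : B ⊆ U) {p : ℝ} (hp0 : 0 ≤ p) (hp1 : p ≤ 1)
    {t : ℝ} (ht0 : 0 < t) (ht1 : t ≤ 1) (a : ℝ)
    [DecidablePred (fun E => ((E ∩ B).card : ℝ) ≤ a)] :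
    ∑ E ∈ U.powerset.filter (fun E => ((E ∩ B).card : ℝ) ≤ a), wt U p E
      ≤ t ^ (-a) * (p * t + (1 - p)) ^ B.card := by
  have key : ∀ E ∈ U.powerset.filter (fun E => ((E ∩ B).card : ℝ) ≤ a),
      wt U p E ≤ t ^ (-a) * (wt U p E * t ^ (E ∩ B).card) := by
    intro E hE
    rw [Finset.mem_filter] at hE
    have hta : t ^ (a:ℝ) ≤ t ^ (((E ∩ B).card : ℕ) : ℝ) :=
      Real.rpow_le_rpow_of_exponent_ge ht0 ht1 hE.2
    rw [Real.rpow_natCast] at hta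
    have hw := wt_nonneg hp0 hp1 (U := U) E
    have h1 : wt U p E * t ^ (a:ℝ) ≤ wt U p E * t ^ (E ∩ B).card :=
      mul_le_mul_of_nonneg_left hta hw
    have hcancel : t ^ (-a) * t ^ (a:ℝ) = 1 := by
      rw [← Real.rpow_add ht0]; simp
    calc wt U p E = t ^ (-a) * (wt U p E * t ^ (a : ℝ)) := by
          rw [mul_left_comm, hcancel, mul_one]
    _ ≤ t ^ (-a) * (wt U p E * t ^ ((E ∩ B).card)) := by
          apply mul_le_mul_of_nonneg_left h1 (Real.rpow_nonneg ht0.le _)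
  calc ∑ E ∈ U.powerset.filter (fun E => ((E ∩ B).card : ℝ) ≤ a), wt U p E
      ≤ ∑ E ∈ U.powerset.filter (fun E => ((E ∩ B).card : ℝ) ≤ a),
          t ^ (-a) * (wt U p E * t ^ (E ∩ B).card) := Finset.sum_le_sum key
    _ ≤ ∑ E ∈ U.powerset, t ^ (-a) * (wt U p E * t ^ (E ∩ B).card) := by
        apply Finset.sum_le_sum_of_subset_of_nonneg (Finset.filter_subset _ _)
        intro E hE _
        have hw := wt_nonneg hp0 hp1 (U := U) E
        positivity
    _ = t ^ (-a) * ∑ E ∈ U.powerset, wt U p E * t ^ (E ∩ B).card := by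
        rw [Finset.mul_sum]
    _ = t ^ (-a) * (p * t + (1 - p)) ^ B.card := by rw [gen_id U B hB p t]



variable {β : Type*} [Fintype β] [DecidableEq β]

/-- the set of non-diagonal pairs with both endpoints in S -/
def pairsIn (S : Finset β) : Finset (Sym2 β) :=
  Finset.univ.filter (fun e => ¬ e.IsDiag ∧ ∀ v ∈ e, v ∈ S)

lemma mem_pairsIn {S : Finset β} {a b : β} :
    s(a, b) ∈ pairsIn S ↔ a ≠ b ∧ a ∈ S ∧ b ∈ S := by
  unfold pairsIn
  simp only [Finset.mem_filter, Finset.mem_univ, true_and, Sym2.isDiag_iff_proj_eq,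
    Sym2.mem_iff]
  constructor
  · rintro ⟨h1, h2⟩
    exact ⟨h1, h2 a (Or.inl rfl), h2 b (Or.inr rfl)⟩
  · rintro ⟨h1, h2, h3⟩
    refine ⟨h1, ?_⟩
    rintro v (rfl | rfl) <;> assumption

lemma card_pairsIn (S : Finset β) : (pairsIn S).card = S.card.choose 2 := by
  rw [← Sym2.card_image_offDiag]
  congr 1
  ext e
  refine e.ind (fun a b => ?_)
  rw [mem_pairsIn]
  simp only [Finset.mem_image, Finset.mem_offDiag]
  constructor
  · rintro ⟨hab, haS, hbS⟩
    exact ⟨(a, b), ⟨haS, hbS, hab⟩, rfl⟩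
  · rintro ⟨⟨x, y⟩, ⟨hx, hy, hxy⟩, he⟩
    rw [Function.uncurry_apply_pair, Sym2.eq_iff] at he
    rcases he with ⟨rfl, rfl⟩ | ⟨rfl, rfl⟩
    · exact ⟨hxy, hx, hy⟩
    · exact ⟨hxy.symm, hy, hx⟩

/-- sum of d(d-1) over vertices is at most m(m-1) in a C4-free graph -/
lemma c4free_count {V : Type*} [Fintype V] [DecidableEq V] (H : SimpleGraph V)
    [DecidableRel H.Adj] (hc4 : C4Free H) :
    ∑ v, H.degree v * H.degree v ≤
      Fintype.card V * Fintype.card V - Fintype.card V + ∑ v, H.degree v := by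
  classical
  set T : Finset (V × V × V) :=
    Finset.univ.filter (fun z => z.2.1 ≠ z.2.2 ∧ H.Adj z.1 z.2.1 ∧ H.Adj z.1 z.2.2) with hT
  -- card T = ∑ d(d-1)
  have hcard : T.card = ∑ v, (H.degree v * H.degree v - H.degree v) := by
    rw [Finset.card_eq_sum_card_fiberwise (f := fun z => z.1) (t := Finset.univ)
      (fun z _ => Finset.mem_univ _)]
    apply Finset.sum_congr rfl
    intro v _
    have heq : T.filter (fun z => z.1 = v)
        = (H.neighborFinset v).offDiag.image (fun w => (v, w)) := by
      ext z
      simp only [hT, Finset.mem_filter, Finset.mem_univ, true_and, Finset.mem_image,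
        Finset.mem_offDiag, SimpleGraph.mem_neighborFinset]
      constructor
      · rintro ⟨⟨hne, h1, h2⟩, rfl⟩
        exact ⟨z.2, ⟨h1, h2, hne⟩, rfl⟩
      · rintro ⟨w, ⟨h1, h2, hne⟩, rfl⟩
        exact ⟨⟨hne, h1, h2⟩, rfl⟩
    rw [heq, Finset.card_image_of_injective _ (fun x y hxy => by
      simpa [Prod.ext_iff] using hxy)]
    rw [Finset.offDiag_card, SimpleGraph.card_neighborFinset_eq_degree]
  -- injectivity of z ↦ z.2 on T
  have hinj : Set.InjOn (fun z : V × V × V => z.2) T := by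
    intro z hz z' hz' hzz
    simp only [hT, Finset.coe_filter, Set.mem_setOf_eq] at hz hz'
    have e1 : z.2.1 = z'.2.1 := congrArg Prod.fst hzz
    have e2 : z.2.2 = z'.2.2 := congrArg Prod.snd hzz
    by_contra hne
    have h1 : z.1 ≠ z'.1 := by
      intro h
      exact hne (Prod.ext h hzz)
    exact hc4 ⟨z.1, z'.1, z.2.1, z.2.2, h1, hz.2.1, hz.2.2.1,
      (by rw [e1]; exact hz'.2.2.1), hz.2.2.2, (by rw [e2]; exact hz'.2.2.2)⟩
  have hTle : T.card ≤ Fintype.card V * Fintype.card V - Fintype.card V := by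
    have h1 : T.card = (T.image (fun z => z.2)).card :=
      (Finset.card_image_of_injOn hinj).symm
    have h2 : T.image (fun z => z.2) ⊆ (Finset.univ : Finset V).offDiag := by
      intro w hw
      simp only [Finset.mem_image] at hw
      obtain ⟨z, hz, rfl⟩ := hw
      simp only [hT, Finset.mem_filter] at hz
      exact Finset.mem_offDiag.2 ⟨Finset.mem_univ _, Finset.mem_univ _, hz.2.1⟩
    calc T.card = (T.image (fun z => z.2)).card := h1
    _ ≤ (Finset.univ : Finset V).offDiag.card := Finset.card_le_card h2
    _ = Fintype.card V * Fintype.card V - Fintype.card V := by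
        rw [Finset.offDiag_card]; rw [Finset.card_univ]
  -- combine
  have hdd : ∀ d : ℕ, d ≤ d * d := by
    intro d
    cases d with
    | zero => simp
    | succ e => exact Nat.le_mul_of_pos_left _ (Nat.succ_pos e)
  calc ∑ v, H.degree v * H.degree v
      = ∑ v, ((H.degree v * H.degree v - H.degree v) + H.degree v) :=
        Finset.sum_congr rfl (fun v _ => (Nat.sub_add_cancel (hdd _)).symm)
    _ = (∑ v, (H.degree v * H.degree v - H.degree v)) + ∑ v, H.degree v :=
        Finset.sum_add_distrib
    _ ≤ (Fintype.card V * Fintype.card V - Fintype.card V) + ∑ v, H.degree v := by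
        rw [← hcard]
        exact Nat.add_le_add_right hTle _

set_option maxHeartbeats 1600000 in
lemma reiman {V : Type*} [Fintype V] [DecidableEq V] (H : SimpleGraph V)
    [DecidableRel H.Adj] (hc4 : C4Free H) (k : ℕ) (hk : 4 ≤ k)
    (hm0 : 0 < Fintype.card V)
    (hdens : (k:ℝ) * (Fintype.card V) ≤ 2 * H.edgeFinset.card) :
    ((k:ℝ) * k - k + 1 ≤ Fintype.card V) ∧
      ((k:ℝ) - 1) * (2 * H.edgeFinset.card) ≤ (Fintype.card V) * ((Fintype.card V) - 1) := by
  classical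
  set m : ℝ := (Fintype.card V : ℝ) with hm
  set y : ℝ := 2 * (H.edgeFinset.card : ℝ) with hy
  have hKr : (4:ℝ) ≤ (k:ℝ) := by exact_mod_cast hk
  have hm1 : (1:ℝ) ≤ m := by rw [hm]; exact_mod_cast hm0
  have hy0 : (0:ℝ) ≤ y := by positivity
  -- degree sum = y
  have hsum : ((∑ v, H.degree v : ℕ) : ℝ) = y := by
    rw [SimpleGraph.sum_degrees_eq_twice_card_edges]; push_cast; ring
  -- Cauchy-Schwarz over ℕ, cast
  have hcs : (∑ v, (H.degree v:ℝ))^2 ≤ m * ∑ v, (H.degree v:ℝ)^2 := by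
    have h := sq_sum_le_card_mul_sum_sq (s := (Finset.univ : Finset V))
      (f := fun v => (H.degree v : ℝ))
    simpa [Finset.card_univ, hm] using h
  have e1 : ((∑ v, H.degree v * H.degree v : ℕ):ℝ) = ∑ v, (H.degree v:ℝ)^2 := by
    push_cast
    exact Finset.sum_congr rfl fun v _ => by ring
  have e2 : ((∑ v, H.degree v : ℕ):ℝ) = ∑ v, (H.degree v:ℝ) := by push_cast; rfl
  have hcount := c4free_count H hc4
  have hcountR : ((∑ v, H.degree v * H.degree v : ℕ) : ℝ) ≤ m * m - m + y := by
    have hmm : Fintype.card V ≤ Fintype.card V * Fintype.card V := by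
      cases' Nat.eq_zero_or_pos (Fintype.card V) with h h
      · simp [h]
      · exact Nat.le_mul_of_pos_left _ h
    calc ((∑ v, H.degree v * H.degree v : ℕ) : ℝ)
        ≤ ((Fintype.card V * Fintype.card V - Fintype.card V + ∑ v, H.degree v : ℕ) : ℝ) := by
          exact_mod_cast hcount
      _ = m * m - m + y := by
          rw [Nat.cast_add, Nat.cast_sub hmm, hsum]
          push_cast
          ring
  have hq : y * y ≤ m * (m * m - m + y) := by
    calc y * y = ((∑ v, H.degree v : ℕ) : ℝ)^2 := by rw [hsum]; ring
    _ = (∑ v, (H.degree v:ℝ))^2 := by rw [e2]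
    _ ≤ m * ∑ v, (H.degree v:ℝ)^2 := hcs
    _ = m * ((∑ v, H.degree v * H.degree v : ℕ) : ℝ) := by rw [e1]
    _ ≤ m * (m * m - m + y) := by
        apply mul_le_mul_of_nonneg_left hcountR (by linarith)
  have hdens' : (k:ℝ) * m ≤ y := hdens
  -- part (a)
  have hma : (k:ℝ) * k - k + 1 ≤ m := by
    have h1 : (0:ℝ) ≤ y - k*m := by linarith
    have h2 : (0:ℝ) ≤ y + k*m - m := by nlinarith
    have h3 := mul_nonneg h1 h2
    nlinarith [sq_nonneg m, mul_pos (lt_of_lt_of_le zero_lt_one hm1) (lt_of_lt_of_le zero_lt_one hm1)]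
  refine ⟨hma, ?_⟩
  -- part (b)
  by_contra hcon
  push_neg at hcon
  have hmk : m - k ≥ (k-1)*(k-1) := by nlinarith
  have hylt : ((k:ℝ)-1)*(y-m) > m*(m-k) := by nlinarith
  have h5 : (((k:ℝ)-1)*y) * (((k:ℝ)-1)*(y-m)) > (m*(m-1)) * (m*(m-k)) := by
    apply mul_lt_mul'' hcon hylt (by nlinarith) (by nlinarith)
  have h6 : (((k:ℝ)-1)*y) * (((k:ℝ)-1)*(y-m)) = ((k:ℝ)-1)^2 * (y*(y-m)) := by ring
  have h7 : y*(y-m) ≤ m*m*(m-1) := by nlinarith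
  have h8 : ((k:ℝ)-1)^2 * (y*(y-m)) ≤ ((k:ℝ)-1)^2 * (m*m*(m-1)) := by
    apply mul_le_mul_of_nonneg_left h7 (by positivity)
  have h9 : (m*(m-1)) * (m*(m-k)) < ((k:ℝ)-1)^2 * (m*m*(m-1)) := by
    calc (m*(m-1)) * (m*(m-k)) < ((k:ℝ)-1)^2 * (y*(y-m)) := by rw [← h6]; exact h5
    _ ≤ _ := h8
  nlinarith [h9, hmk, hm1, hKr]



lemma global_edge_ncard {n : ℕ} (E : Finset (Sym2 (Fin n)))
    (hE : E ⊆ pairsIn (Finset.univ)) :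
    (SimpleGraph.fromEdgeSet (↑E : Set (Sym2 (Fin n)))).edgeSet.ncard = E.card := by
  rw [SimpleGraph.edgeSet_fromEdgeSet]
  have h : (↑E : Set (Sym2 (Fin n))) \ { e | e.IsDiag } = ↑E := by
    ext e
    simp only [Set.mem_diff, Set.mem_setOf_eq, Finset.mem_coe, and_iff_left_iff_imp]
    intro heE hdiag
    have h2 := hE heE
    simp only [pairsIn, Finset.mem_filter] at h2
    exact h2.2.1 hdiag
  rw [show Sym2.diagSet = {e : Sym2 (Fin n) | e.IsDiag} from rfl, h, Set.ncard_coe_finset]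

lemma induce_edge_ncard {n : ℕ} (E : Finset (Sym2 (Fin n)))
    (hE : E ⊆ pairsIn (Finset.univ)) (S : Finset (Fin n)) :
    ((SimpleGraph.fromEdgeSet (↑E : Set (Sym2 (Fin n)))).induce
        (↑S : Set (Fin n))).edgeSet.ncard = (E ∩ pairsIn S).card := by
  classical
  set G := SimpleGraph.fromEdgeSet (↑E : Set (Sym2 (Fin n))) with hG
  set H := G.induce (↑S : Set (Fin n)) with hH
  have himg : Sym2.map (Subtype.val) '' H.edgeSet = ↑(E ∩ pairsIn S) := by
    ext e
    constructor
    · rintro ⟨e', he', rfl⟩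
      induction e' using Sym2.ind with
      | _ u v =>
        rw [SimpleGraph.mem_edgeSet] at he'
        have hadj : G.Adj ↑u ↑v := he'
        rw [hG, SimpleGraph.fromEdgeSet_adj] at hadj
        rw [Sym2.map_pair_eq]
        simp only [Finset.coe_inter, Set.mem_inter_iff, Finset.mem_coe]
        exact ⟨hadj.1, mem_pairsIn.2 ⟨hadj.2, u.2, v.2⟩⟩
    · intro he
      simp only [Finset.coe_inter, Set.mem_inter_iff, Finset.mem_coe] at he
      obtain ⟨heE, heP⟩ := he
      induction e using Sym2.ind with
      | _ a b =>
        rw [mem_pairsIn] at heP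
        obtain ⟨hab, haS, hbS⟩ := heP
        refine ⟨s(⟨a, haS⟩, ⟨b, hbS⟩), ?_, by rw [Sym2.map_pair_eq]⟩
        rw [SimpleGraph.mem_edgeSet]
        show G.Adj a b
        rw [hG, SimpleGraph.fromEdgeSet_adj]
        exact ⟨heE, hab⟩
  calc H.edgeSet.ncard = (Sym2.map (Subtype.val) '' H.edgeSet).ncard :=
        (Set.ncard_image_of_injective _ (Sym2.map.injective Subtype.val_injective)).symm
  _ = (↑(E ∩ pairsIn S) : Set (Sym2 (Fin n))).ncard := by rw [himg]
  _ = (E ∩ pairsIn S).card := Set.ncard_coe_finset _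

lemma ncard_subtype (n : ℕ) (S : Finset (Fin n)) :
    Nat.card ↥(↑S : Set (Fin n)) = S.card := by
  simp [Nat.card_eq_fintype_card]

lemma edge_ncard_finset {V : Type*} [Fintype V] (H : SimpleGraph V) [DecidableEq V]
    [DecidableRel H.Adj] [Fintype H.edgeSet] :
    H.edgeSet.ncard = H.edgeFinset.card := by
  rw [← SimpleGraph.coe_edgeFinset, Set.ncard_coe_finset]


lemma sum_union_le {α : Type*} [DecidableEq α] {f : α → ℝ} (hf : ∀ a, 0 ≤ f a)
    (A B : Finset α) : ∑ e ∈ A ∪ B, f e ≤ ∑ e ∈ A, f e + ∑ e ∈ B, f e := by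
  rw [← Finset.union_sdiff_self_eq_union, Finset.sum_union Finset.disjoint_sdiff]
  have h := Finset.sum_le_sum_of_subset_of_nonneg (Finset.sdiff_subset : B \ A ⊆ B)
    (fun x _ _ => hf x)
  linarith [h]

lemma sum_biUnion_le {α β : Type*} [DecidableEq α] [DecidableEq β] {f : α → ℝ}
    (hf : ∀ a, 0 ≤ f a) (s : Finset β) (t : β → Finset α) :
    ∑ e ∈ s.biUnion t, f e ≤ ∑ b ∈ s, ∑ e ∈ t b, f e := by
  induction s using Finset.induction with
  | empty => simp
  | @insert b s hb ih =>
    rw [Finset.biUnion_insert, Finset.sum_insert hb]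
    calc ∑ e ∈ t b ∪ s.biUnion t, f e ≤ ∑ e ∈ t b, f e + ∑ e ∈ s.biUnion t, f e :=
          sum_union_le hf _ _
    _ ≤ _ := by linarith


set_option maxHeartbeats 1000000 in
lemma tailcore {p x t M Q mR : ℝ}
    (hx0 : 0 < x) (hx3 : x ≤ 1/3) (hp0 : 0 < p) (hp1 : p < 1)
    (hpx : Real.exp 1 * x ≤ p)
    (ht : t = x*(1-p)/((1-x)*p))
    (hQ : 0 < Q) (hQm : 4*Q + 1 ≤ mR) (hm13 : 13 ≤ mR)
    (hM : M = mR*(mR-1)/2) :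
    t ^ (-(x*M)) * (p*t + (1-p)) ^ M ≤ ((1-p^4) ^ Q) ^ mR := by
  have h1p : (0:ℝ) < 1 - p := by linarith
  have h1x : (0:ℝ) < 1 - x := by linarith
  have ht0 : 0 < t := by rw [ht]; positivity
  have hqt : p*t + (1-p) = (1-p)/(1-x) := by
    rw [ht]; field_simp; ring
  have hp4 : p^4 < 1 := by nlinarith [pow_lt_one₀ hp0.le hp1 (by norm_num : 4 ≠ 0)]
  have hp40 : 0 < p^4 := by positivity
  have hB0 : (0:ℝ) < 1 - p^4 := by linarith
  -- logs
  set L' : ℝ := Real.log (1 - p^4) with hL'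
  have hL'neg : L' ≤ 0 := Real.log_nonpos (by linarith) (by linarith)
  have hlogt : Real.log t = Real.log x + Real.log (1-p) - (Real.log (1-x) + Real.log p) := by
    rw [ht, Real.log_div (by positivity) (by positivity), Real.log_mul (ne_of_gt hx0) (ne_of_gt h1p),
      Real.log_mul (ne_of_gt h1x) (ne_of_gt hp0)]
  have hlogfrac : Real.log ((1-p)/(1-x)) = Real.log (1-p) - Real.log (1-x) :=
    Real.log_div (ne_of_gt h1p) (ne_of_gt h1x)
  have hfact : L' = Real.log (1-p) + (Real.log (1+p) + Real.log (1+p^2)) := by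
    rw [hL', show (1:ℝ) - p^4 = (1-p)*((1+p)*(1+p^2)) by ring,
      Real.log_mul (ne_of_gt h1p) (by positivity), Real.log_mul (by positivity) (by positivity)]
  have hFC := FC hx0 hx3 hpx hp1
  have hlogpx : Real.log (p/x) = Real.log p - Real.log x := Real.log_div (ne_of_gt hp0) (ne_of_gt hx0)
  -- core per-unit inequality
  have hcore1 : -(x * Real.log t) + Real.log ((1-p)/(1-x)) ≤ L'/2 := by
    rw [hlogt, hlogfrac]
    rw [hlogpx] at hFC
    have hhalf : (1/2 - x) * L' ≤ 0 :=
      mul_nonpos_of_nonneg_of_nonpos (by linarith) hL'neg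
    rw [hfact] at hhalf ⊢
    nlinarith [hFC, hhalf]
  -- multiply by M and compare
  have hM0 : 0 ≤ M := by rw [hM]; nlinarith
  have hcoreM : (-(x*M)) * Real.log t + M * Real.log ((1-p)/(1-x)) ≤ mR * (Q * L') := by
    have h1 : M * (-(x * Real.log t) + Real.log ((1-p)/(1-x))) ≤ M * (L'/2) :=
      mul_le_mul_of_nonneg_left hcore1 hM0
    have h2 : M * (L'/2) ≤ mR * (Q * L') := by
      have hc : mR * Q ≤ M / 2 := by rw [hM]; nlinarith
      nlinarith [mul_nonneg (by nlinarith : (0:ℝ) ≤ M/2 - mR * Q) (by linarith : 0 ≤ -L')]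
    nlinarith [h1, h2]
  -- convert to exp form
  have e1 : t ^ (-(x*M)) = Real.exp (Real.log t * (-(x*M))) := Real.rpow_def_of_pos ht0 _
  have e2 : (p*t + (1-p)) ^ M = Real.exp (Real.log ((1-p)/(1-x)) * M) := by
    rw [hqt]
    exact Real.rpow_def_of_pos (by positivity) _
  have e3 : ((1-p^4) ^ Q) ^ mR = Real.exp ((L' * Q) * mR) := by
    rw [Real.rpow_def_of_pos hB0, Real.rpow_def_of_pos (Real.exp_pos _), Real.log_exp]
  rw [e1, e2, e3, ← Real.exp_add]
  apply Real.exp_le_exp.2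
  nlinarith [hcoreM]

lemma geom_tail (n : ℕ) :
    ∑ j ∈ Finset.range (n+1), (if 13 ≤ j then (1/2:ℝ)^j else 0) ≤ (1/2)^12 := by
  rw [← Finset.sum_filter]
  have hf : (Finset.range (n+1)).filter (fun j => 13 ≤ j) = Finset.Ico 13 (n+1) := by
    ext j; simp [Finset.mem_filter, Finset.mem_range, Finset.mem_Ico]; omega
  rw [hf, Finset.sum_Ico_eq_sum_range]
  have : ∀ i, ((1:ℝ)/2)^(13+i) = (1/2)^13 * (1/2)^i := fun i => by rw [pow_add]
  rw [Finset.sum_congr rfl (fun i _ => this i), ← Finset.mul_sum]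
  have hg := sum_geometric_two_le (n + 1 - 13)
  calc (1/2:ℝ)^13 * ∑ i ∈ Finset.range (n+1-13), (1/2)^i ≤ (1/2)^13 * 2 := by
        apply mul_le_mul_of_nonneg_left hg (by norm_num)
  _ = (1/2)^12 := by norm_num


set_option maxHeartbeats 4000000 in
/-- Theorem 6.4: if `n` and `p` satisfy the stated inequalities then there is an `n`-vertex
`K_{s,s}`-free graph of average degree at least `(n-1)p/2` in which every induced `C₄`-free
subgraph has average degree less than `k`. -/
theorem random_lower_bound (k s : ℕ) (hk : 2 ≤ k) (hs : 2 ≤ s) (n : ℕ) (hn : 0 < n)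
    (p : ℝ) (hp0 : 0 ≤ p) (hp1 : p ≤ 1)
    (h1 : (n : ℝ) ^ 2 * p ^ s ≤ 1/2)
    (h2 : (n : ℝ) * (1 - p ^ 4) ^ (((k : ℝ) ^ 2 - 3 * k - 2) / 4) ≤ 1/2)
    (h3 : Real.exp (-((n : ℝ) * ((n : ℝ) - 1) / 2) * p / 4) ≤ 1/2) :
    ∃ G : SimpleGraph (Fin n),
      ((n : ℝ) - 1) * p / 2 ≤ avgDeg G ∧ KssFree G s ∧
      ∀ S : Finset (Fin n), C4Free (G.induce (S : Set (Fin n))) →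
        avgDeg (G.induce (S : Set (Fin n))) < k := by
  classical
  -- ## basic consequences of the hypotheses
  have hn1 : (1:ℝ) ≤ (n:ℝ) := by exact_mod_cast hn
  have hplt1 : p < 1 := by
    rcases lt_or_eq_of_le hp1 with h | h
    · exact h
    · exfalso; rw [h, one_pow] at h1; nlinarith
  have hp4lt1 : p ^ 4 < 1 := by
    rcases eq_or_lt_of_le hp0 with h | h
    · rw [← h]; norm_num
    · exact pow_lt_one₀ hp0 hplt1 (by norm_num)
  have hB0 : (0:ℝ) < 1 - p^4 := by linarith
  have hB1 : 1 - p^4 ≤ 1 := by nlinarith [pow_nonneg hp0 4]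
  have hn2 : 2 ≤ n := by
    by_contra hcon
    push_neg at hcon
    interval_cases n
    norm_num at h3
  have hn2R : (2:ℝ) ≤ (n:ℝ) := by exact_mod_cast hn2
  have hQpos : (0:ℝ) < (k:ℝ)^2 - 3*k - 2 := by
    by_contra hc
    push_neg at hc
    have hexp : ((k:ℝ)^2 - 3*k - 2)/4 ≤ 0 := by linarith
    have hone := Real.one_le_rpow_of_pos_of_le_one_of_nonpos hB0 hB1 hexp
    nlinarith [h2, hone]
  have hk4 : 4 ≤ k := by
    by_contra hc
    push_neg at hc
    have hk3 : (k:ℝ) ≤ 3 := by exact_mod_cast Nat.lt_succ_iff.mp hc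
    have hk2 : (2:ℝ) ≤ (k:ℝ) := by exact_mod_cast hk
    nlinarith [hQpos]
  have hkR : (4:ℝ) ≤ (k:ℝ) := by exact_mod_cast hk4
  have hkm1 : (0:ℝ) < (k:ℝ) - 1 := by linarith
  set x : ℝ := 1/((k:ℝ)-1) with hxdef
  have hx0 : 0 < x := by rw [hxdef]; positivity
  have hx3 : x ≤ 1/3 := by
    rw [hxdef]
    rw [div_le_div_iff₀ hkm1 (by norm_num)]
    linarith
  have hpx : Real.exp 1 * x ≤ p := pmin hk4 hn2 hp0 hplt1 h2
  have hp0' : 0 < p := lt_of_lt_of_le (by positivity) hpx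
  have hxp : x < p := by
    have he1 : (1:ℝ) < Real.exp 1 := by
      have := Real.exp_one_gt_d9; linarith
    nlinarith [hpx, hx0]
  set Q : ℝ := ((k:ℝ)^2 - 3*k - 2)/4 with hQdef
  have hQ0 : 0 < Q := by rw [hQdef]; linarith
  set q0 : ℝ := (1 - p^4) ^ Q with hq0def
  have hq00 : 0 ≤ q0 := Real.rpow_nonneg hB0.le _
  have h2' : (n:ℝ) * q0 ≤ 1/2 := h2
  -- ## the coordinate set and weights
  set U : Finset (Sym2 (Fin n)) := pairsIn (Finset.univ : Finset (Fin n)) with hUdef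
  have hUcard : (U.card : ℝ) = (n:ℝ)*((n:ℝ)-1)/2 := by
    rw [hUdef, card_pairsIn, Finset.card_univ, Fintype.card_fin, Nat.cast_choose_two]
  -- the three bad collections
  set G : Finset (Sym2 (Fin n)) → SimpleGraph (Fin n) :=
    fun E => SimpleGraph.fromEdgeSet (↑E : Set (Sym2 (Fin n))) with hGdef
  set Bad1 : Finset (Finset (Sym2 (Fin n))) :=
    U.powerset.filter (fun E => ¬ KssFree (G E) s) with hBad1
  set Bad2 : Finset (Finset (Sym2 (Fin n))) :=
    U.powerset.filter (fun E => ∃ S : Finset (Fin n),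
      C4Free ((G E).induce (↑S : Set (Fin n))) ∧
      (k:ℝ) ≤ avgDeg ((G E).induce (↑S : Set (Fin n)))) with hBad2
  set Bad3 : Finset (Finset (Sym2 (Fin n))) :=
    U.powerset.filter (fun E => ((E ∩ U).card : ℝ) ≤ (U.card:ℝ) * p / 2) with hBad3
  have hwt0 : ∀ E, 0 ≤ wt U p E := wt_nonneg hp0 hp1
  -- ## bound for Bad1
  have hbound1 : ∑ E ∈ Bad1, wt U p E ≤ 1/4 := by
    set Pairs : Finset (Finset (Fin n) × Finset (Fin n)) :=
      ((Finset.univ.powersetCard s) ×ˢ (Finset.univ.powersetCard s)).filter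
        (fun ST => Disjoint ST.1 ST.2) with hPairs
    set F : Finset (Fin n) × Finset (Fin n) → Finset (Sym2 (Fin n)) :=
      fun ST => (ST.1 ×ˢ ST.2).image (fun ab => Sym2.mk ab.1 ab.2) with hFdef
    have hFU : ∀ ST ∈ Pairs, F ST ⊆ U := by
      intro ST hST e he
      rw [hPairs, Finset.mem_filter] at hST
      rw [hFdef] at he
      simp only [Finset.mem_image, Finset.mem_product] at he
      obtain ⟨⟨a, b⟩, ⟨haS, hbT⟩, rfl⟩ := he
      rw [hUdef]
      have hab : a ≠ b := by
        intro h
        exact (Finset.disjoint_left.1 hST.2) haS (h ▸ hbT)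
      exact mem_pairsIn.2 ⟨hab, Finset.mem_univ a, Finset.mem_univ b⟩
    have hFcard : ∀ ST ∈ Pairs, (F ST).card = s * s := by
      intro ST hST
      rw [hPairs, Finset.mem_filter, Finset.mem_product] at hST
      obtain ⟨⟨hS, hT⟩, hd⟩ := hST
      rw [Finset.mem_powersetCard] at hS hT
      rw [hFdef]
      rw [Finset.card_image_of_injOn, Finset.card_product, hS.2, hT.2]
      rintro ⟨a, b⟩ hab ⟨a', b'⟩ hab' heq
      simp only [Finset.mem_coe, Finset.mem_product] at hab hab'
      rw [Sym2.mk_eq_mk_iff (p := (a, b)) (q := (a', b'))] at heq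
      rcases heq with h | h
      · exact h
      · exfalso
        rw [Prod.swap_prod_mk, Prod.mk.injEq] at h
        exact (Finset.disjoint_left.1 hd) hab.1 (h.1 ▸ hab'.2)
    have hsub1 : Bad1 ⊆ Pairs.biUnion (fun ST => U.powerset.filter (fun E => F ST ⊆ E)) := by
      intro E hE
      rw [hBad1, Finset.mem_filter] at hE
      obtain ⟨hEpow, hnk⟩ := hE
      rw [KssFree, not_not] at hnk
      obtain ⟨S, T, hd, hcS, hcT, hadj⟩ := hnk
      refine Finset.mem_biUnion.2 ⟨(S, T), ?_, Finset.mem_filter.2 ⟨hEpow, ?_⟩⟩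
      · rw [hPairs, Finset.mem_filter, Finset.mem_product]
        exact ⟨⟨Finset.mem_powersetCard.2 ⟨Finset.subset_univ S, hcS⟩,
          Finset.mem_powersetCard.2 ⟨Finset.subset_univ T, hcT⟩⟩, hd⟩
      · intro e he
        rw [hFdef] at he
        simp only [Finset.mem_image, Finset.mem_product] at he
        obtain ⟨⟨a, b⟩, ⟨haS, hbT⟩, rfl⟩ := he
        have hadj2 := hadj a haS b hbT
        rw [hGdef] at hadj2
        simp only [SimpleGraph.fromEdgeSet_adj, Finset.mem_coe] at hadj2
        exact hadj2.1
    calc ∑ E ∈ Bad1, wt U p E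
        ≤ ∑ E ∈ Pairs.biUnion (fun ST => U.powerset.filter (fun E => F ST ⊆ E)), wt U p E :=
          Finset.sum_le_sum_of_subset_of_nonneg hsub1 (fun E _ _ => hwt0 E)
      _ ≤ ∑ ST ∈ Pairs, ∑ E ∈ U.powerset.filter (fun E => F ST ⊆ E), wt U p E :=
          sum_biUnion_le hwt0 _ _
      _ ≤ ∑ _ST ∈ Pairs, p ^ (s * s) := by
          apply Finset.sum_le_sum
          intro ST hST
          rw [sum_wt_superset U (F ST) (hFU ST hST) p, hFcard ST hST]
      _ = (Pairs.card : ℝ) * p ^ (s*s) := by rw [Finset.sum_const, nsmul_eq_mul]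
      _ ≤ ((n:ℝ)^s)^2 * p ^ (s*s) := by
          apply mul_le_mul_of_nonneg_right _ (by positivity)
          have hple : Pairs.card ≤ (n.choose s) * (n.choose s) := by
            calc Pairs.card ≤ ((Finset.univ.powersetCard s (α := Fin n)) ×ˢ
                  (Finset.univ.powersetCard s)).card := Finset.card_filter_le _ _
            _ = (n.choose s) * (n.choose s) := by
                rw [Finset.card_product, Finset.card_powersetCard, Finset.card_univ,
                  Fintype.card_fin]
          calc (Pairs.card : ℝ) ≤ ((n.choose s * (n.choose s) : ℕ) : ℝ) := by exact_mod_cast hple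
          _ ≤ ((n:ℝ)^s)^2 := by
              have hcc : ((n.choose s : ℕ):ℝ) ≤ (n:ℝ)^s := by
                have h := Nat.choose_le_pow n s
                exact_mod_cast h
              have h0 : (0:ℝ) ≤ ((n.choose s : ℕ):ℝ) := by positivity
              push_cast at hcc h0 ⊢
              nlinarith [hcc, h0]
      _ = ((n:ℝ)^2 * p^s)^s := by
          rw [mul_pow, ← pow_mul, ← pow_mul, mul_comm s 2, ← pow_mul]
      _ ≤ (1/2:ℝ)^s := by
          apply pow_le_pow_left₀ (by positivity) h1
      _ ≤ 1/4 := by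
          calc ((1:ℝ)/2)^s ≤ (1/2)^2 := by
                apply pow_le_pow_of_le_one (by norm_num) (by norm_num) hs
          _ = 1/4 := by norm_num
  -- ## bound for Bad3
  have hbound3 : ∑ E ∈ Bad3, wt U p E ≤ 0.67 := by
    have htb := tail_bound U U (subset_refl U) hp0 hp1 (t := (1/2:ℝ)) (by norm_num) (by norm_num)
      ((U.card:ℝ) * p / 2)
    rw [hBad3]
    refine le_trans htb ?_
    set γ : ℝ := (U.card:ℝ) * p with hγ
    have hγ0 : 0 ≤ γ := by rw [hγ]; positivity
    have hc1 : p * (1/2) + (1 - p) = 1 - p/2 := by ring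
    have hcle : (1 - p/2 : ℝ) ≤ Real.exp (-(p/2)) := by
      have := Real.add_one_le_exp (-(p/2)); linarith
    have hc0 : (0:ℝ) ≤ 1 - p/2 := by linarith
    have hpow : (p * (1/2) + (1-p))^U.card ≤ Real.exp (-(γ/2)) := by
      rw [hc1]
      calc (1 - p/2)^U.card ≤ (Real.exp (-(p/2)))^U.card := pow_le_pow_left₀ hc0 hcle _
      _ = Real.exp ((U.card:ℝ) * (-(p/2))) := by rw [← Real.exp_nat_mul]
      _ = Real.exp (-(γ/2)) := by rw [hγ]; ring_nf
    have hhalf : ((1/2:ℝ)) ^ (-((U.card:ℝ) * p / 2)) = Real.exp ((γ/2) * Real.log 2) := by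
      rw [Real.rpow_def_of_pos (by norm_num : (0:ℝ) < 1/2)]
      rw [show Real.log (1/2) = -Real.log 2 by
        rw [Real.log_div one_ne_zero (by norm_num), Real.log_one]; ring]
      rw [hγ]; ring_nf
    have h3' : Real.exp (-(γ/4)) ≤ 1/2 := by
      rw [hγ, hUcard]
      calc Real.exp (-((n:ℝ)*((n:ℝ)-1)/2 * p/4)) = Real.exp (-((n:ℝ)*((n:ℝ)-1)/2) * p / 4) := by
            ring_nf
      _ ≤ 1/2 := h3
    have hl2 : Real.log 2 ≤ 0.6931472 := by have := Real.log_two_lt_d9; linarith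
    have hexp1 : (γ/2) * Real.log 2 + (-(γ/2)) ≤ (-(γ/4)) * (3/5) := by nlinarith [hγ0, hl2]
    have hstep : ((1/2:ℝ)) ^ (-((U.card:ℝ) * p / 2)) * (p * (1/2) + (1-p))^U.card
        ≤ Real.exp ((-(γ/4)) * (3/5)) := by
      rw [hhalf]
      calc Real.exp ((γ/2) * Real.log 2) * (p * (1/2) + (1-p))^U.card
          ≤ Real.exp ((γ/2) * Real.log 2) * Real.exp (-(γ/2)) := by
            apply mul_le_mul_of_nonneg_left hpow (le_of_lt (Real.exp_pos _))
        _ = Real.exp ((γ/2) * Real.log 2 + (-(γ/2))) := (Real.exp_add _ _).symm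
        _ ≤ Real.exp ((-(γ/4)) * (3/5)) := Real.exp_le_exp.2 hexp1
    refine le_trans hstep ?_
    have hrpow : Real.exp ((-(γ/4)) * (3/5)) = (Real.exp (-(γ/4))) ^ ((3/5 : ℝ)) := by
      rw [Real.rpow_def_of_pos (Real.exp_pos _), Real.log_exp]
    rw [hrpow]
    calc (Real.exp (-(γ/4))) ^ ((3/5 : ℝ)) ≤ ((1/2:ℝ)) ^ ((3/5:ℝ)) :=
          Real.rpow_le_rpow (le_of_lt (Real.exp_pos _)) h3' (by norm_num)
    _ ≤ 0.67 := by
        have h5 : (((1/2:ℝ)) ^ ((3/5:ℝ)))^(5:ℕ) ≤ (0.67:ℝ)^(5:ℕ) := by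
          have e1 : (((1/2:ℝ)) ^ ((3/5:ℝ)))^(5:ℕ) = ((1/2:ℝ)) ^ ((3:ℝ)) := by
            rw [← Real.rpow_natCast (((1/2:ℝ)) ^ ((3/5:ℝ))) 5, ← Real.rpow_mul (by norm_num)]
            norm_num
          rw [e1]
          rw [show ((3:ℝ)) = ((3:ℕ):ℝ) by norm_num, Real.rpow_natCast]
          norm_num
        exact le_of_pow_le_pow_left₀ (by norm_num) (by norm_num) h5
  -- ## bound for Bad2
  have hbound2 : ∑ E ∈ Bad2, wt U p E ≤ (1/2:ℝ)^12 := by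
    have hBU : ∀ S : Finset (Fin n), pairsIn S ⊆ U := by
      intro S e he
      rw [hUdef]
      simp only [pairsIn, Finset.mem_filter] at he ⊢
      exact ⟨he.1, he.2.1, fun v _ => Finset.mem_univ v⟩
    have claim2a : ∀ (S : Finset (Fin n)) (E : Finset (Sym2 (Fin n))), E ⊆ U →
        C4Free ((G E).induce (↑S : Set (Fin n))) →
        (k:ℝ) ≤ avgDeg ((G E).induce (↑S : Set (Fin n))) →
        ((k:ℝ)*k - k + 1 ≤ (S.card:ℝ)) ∧
          ((E ∩ pairsIn S).card : ℝ) ≤ x * ((S.card:ℝ)*((S.card:ℝ)-1)/2) := by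
      intro S E hEsub hC4 havg
      have hncard : ((G E).induce (↑S : Set (Fin n))).edgeSet.ncard = (E ∩ pairsIn S).card := by
        rw [hGdef]
        exact induce_edge_ncard E hEsub S
      have hNc : Nat.card ↥(↑S : Set (Fin n)) = S.card := ncard_subtype n S
      rw [avgDeg, hncard, hNc] at havg
      have hm0 : 0 < S.card := by
        by_contra h0
        push_neg at h0
        have : S.card = 0 := by omega
        rw [this] at havg
        norm_num at havg
        linarith
      have hm0R : (0:ℝ) < (S.card : ℝ) := by exact_mod_cast hm0
      rw [le_div_iff₀ hm0R] at havg
      have havg' : (k:ℝ)*(S.card:ℝ) ≤ 2*((E ∩ pairsIn S).card:ℝ) := by linarith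
      have hFc : Fintype.card ↥(↑S : Set (Fin n)) = S.card := by
        rw [← Nat.card_eq_fintype_card]; exact hNc
      have hedgeF : (((G E).induce (↑S : Set (Fin n))).edgeFinset.card : ℕ)
          = (E ∩ pairsIn S).card := by
        rw [← edge_ncard_finset]; exact hncard
      have hrei := reiman ((G E).induce (↑S : Set (Fin n))) hC4 k hk4
        (by rw [hFc]; exact hm0)
        (by rw [hFc, hedgeF]; exact havg')
      obtain ⟨ha, hb⟩ := hrei
      rw [hFc] at ha
      rw [hFc, hedgeF] at hb
      refine ⟨ha, ?_⟩
      rw [hxdef]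
      rw [show (1/((k:ℝ)-1)) * ((S.card:ℝ)*((S.card:ℝ)-1)/2)
        = (S.card:ℝ)*((S.card:ℝ)-1)/(2*((k:ℝ)-1)) by
          rw [div_mul_div_comm, one_mul, mul_comm ((k:ℝ)-1) 2]]
      rw [le_div_iff₀ (by positivity)]
      linarith [hb]
    have claim2b : ∀ S : Finset (Fin n),
        ∑ E ∈ U.powerset.filter (fun E =>
            ((k:ℝ)*k - k + 1 ≤ (S.card:ℝ)) ∧
            ((E ∩ pairsIn S).card : ℝ) ≤ x * ((S.card:ℝ)*((S.card:ℝ)-1)/2)), wt U p E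
          ≤ (if (k:ℝ)*(k:ℝ) - (k:ℝ) + 1 ≤ (S.card:ℝ) then q0 ^ S.card else 0) := by
      intro S
      by_cases hcond : (k:ℝ)*(k:ℝ) - (k:ℝ) + 1 ≤ (S.card:ℝ)
      · rw [if_pos hcond]
        have hm13 : (13:ℝ) ≤ (S.card:ℝ) := by nlinarith [hkR, hcond]
        set t : ℝ := x*(1-p)/((1-x)*p) with htdef
        have h1p : (0:ℝ) < 1 - p := by linarith
        have h1x : (0:ℝ) < 1 - x := by linarith
        have ht0 : 0 < t := by
          rw [htdef]
          exact div_pos (mul_pos hx0 h1p) (mul_pos h1x hp0')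
        have ht1 : t ≤ 1 := by
          rw [htdef, div_le_one (mul_pos h1x hp0')]
          nlinarith [hxp]
        have hss : U.powerset.filter (fun E =>
              ((k:ℝ)*k - k + 1 ≤ (S.card:ℝ)) ∧
              ((E ∩ pairsIn S).card : ℝ) ≤ x * ((S.card:ℝ)*((S.card:ℝ)-1)/2))
            ⊆ U.powerset.filter (fun E =>
              ((E ∩ pairsIn S).card : ℝ) ≤ x * ((S.card:ℝ)*((S.card:ℝ)-1)/2)) := by
          intro E hE
          rw [Finset.mem_filter] at hE ⊢
          exact ⟨hE.1, hE.2.2⟩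
        have htb := tail_bound U (pairsIn S) (hBU S) hp0 hp1 ht0 ht1
          (x * ((S.card:ℝ)*((S.card:ℝ)-1)/2))
        have hcardB : (((pairsIn S).card : ℕ) : ℝ) = (S.card:ℝ)*((S.card:ℝ)-1)/2 := by
          rw [card_pairsIn, Nat.cast_choose_two]
        have hQm : 4*Q + 1 ≤ (S.card:ℝ) := by
          rw [hQdef]; nlinarith [hcond]
        calc ∑ E ∈ U.powerset.filter (fun E =>
              ((k:ℝ)*k - k + 1 ≤ (S.card:ℝ)) ∧
              ((E ∩ pairsIn S).card : ℝ) ≤ x * ((S.card:ℝ)*((S.card:ℝ)-1)/2)), wt U p E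
            ≤ ∑ E ∈ U.powerset.filter (fun E =>
              ((E ∩ pairsIn S).card : ℝ) ≤ x * ((S.card:ℝ)*((S.card:ℝ)-1)/2)), wt U p E :=
              Finset.sum_le_sum_of_subset_of_nonneg hss (fun E _ _ => hwt0 E)
          _ ≤ t ^ (-(x * ((S.card:ℝ)*((S.card:ℝ)-1)/2)))
              * (p*t + (1-p)) ^ (pairsIn S).card := htb
          _ = t ^ (-(x * ((S.card:ℝ)*((S.card:ℝ)-1)/2)))
              * (p*t + (1-p)) ^ ((S.card:ℝ)*((S.card:ℝ)-1)/2) := by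
              rw [← Real.rpow_natCast (p*t + (1-p)) (pairsIn S).card, hcardB]
          _ ≤ ((1-p^4) ^ Q) ^ ((S.card:ℝ)) :=
              tailcore hx0 hx3 hp0' hplt1 hpx htdef hQ0 hQm hm13 rfl
          _ = q0 ^ S.card := by rw [← hq0def, Real.rpow_natCast]
      · rw [if_neg hcond]
        rw [Finset.filter_false_of_mem, Finset.sum_empty]
        intro E _
        intro hcc
        exact hcond hcc.1
    have hsub2 : Bad2 ⊆ (Finset.univ : Finset (Fin n)).powerset.biUnion (fun S =>
        U.powerset.filter (fun E =>
          ((k:ℝ)*k - k + 1 ≤ (S.card:ℝ)) ∧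
          ((E ∩ pairsIn S).card : ℝ) ≤ x * ((S.card:ℝ)*((S.card:ℝ)-1)/2))) := by
      intro E hE
      rw [hBad2, Finset.mem_filter] at hE
      obtain ⟨hEpow, S, hC4, havg⟩ := hE
      have h2a := claim2a S E (Finset.mem_powerset.1 hEpow) hC4 havg
      exact Finset.mem_biUnion.2 ⟨S, Finset.mem_powerset.2 (Finset.subset_univ S),
        Finset.mem_filter.2 ⟨hEpow, h2a⟩⟩
    calc ∑ E ∈ Bad2, wt U p E
        ≤ ∑ E ∈ (Finset.univ : Finset (Fin n)).powerset.biUnion (fun S =>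
            U.powerset.filter (fun E =>
              ((k:ℝ)*k - k + 1 ≤ (S.card:ℝ)) ∧
              ((E ∩ pairsIn S).card : ℝ) ≤ x * ((S.card:ℝ)*((S.card:ℝ)-1)/2))), wt U p E :=
          Finset.sum_le_sum_of_subset_of_nonneg hsub2 (fun E _ _ => hwt0 E)
      _ ≤ ∑ S ∈ (Finset.univ : Finset (Fin n)).powerset, ∑ E ∈ U.powerset.filter (fun E =>
              ((k:ℝ)*k - k + 1 ≤ (S.card:ℝ)) ∧
              ((E ∩ pairsIn S).card : ℝ) ≤ x * ((S.card:ℝ)*((S.card:ℝ)-1)/2)), wt U p E :=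
          sum_biUnion_le hwt0 _ _
      _ ≤ ∑ S ∈ (Finset.univ : Finset (Fin n)).powerset,
            (if (k:ℝ)*(k:ℝ) - (k:ℝ) + 1 ≤ (S.card:ℝ) then q0 ^ S.card else 0) :=
          Finset.sum_le_sum (fun S _ => claim2b S)
      _ = ∑ j ∈ Finset.range (n+1),
            (Finset.univ : Finset (Fin n)).card.choose j •
              (if (k:ℝ)*(k:ℝ) - (k:ℝ) + 1 ≤ (j:ℝ) then q0 ^ j else 0) := by
          rw [Finset.sum_powerset_apply_card
            (f := fun j => if (k:ℝ)*(k:ℝ) - (k:ℝ) + 1 ≤ (j:ℝ) then q0 ^ j else 0)]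
          rw [Finset.card_univ, Fintype.card_fin]
      _ ≤ ∑ j ∈ Finset.range (n+1), (if 13 ≤ j then (1/2:ℝ)^j else 0) := by
          apply Finset.sum_le_sum
          intro j _
          rw [Finset.card_univ, Fintype.card_fin, nsmul_eq_mul]
          by_cases hcj : (k:ℝ)*(k:ℝ) - (k:ℝ) + 1 ≤ (j:ℝ)
          · rw [if_pos hcj]
            have h13 : 13 ≤ j := by
              have : (13:ℝ) ≤ (j:ℝ) := by nlinarith [hkR, hcj]
              exact_mod_cast this
            rw [if_pos h13]
            have hch : ((n.choose j : ℕ):ℝ) ≤ (n:ℝ)^j := by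
              have h := Nat.choose_le_pow n j
              exact_mod_cast h
            calc ((n.choose j : ℕ):ℝ) * q0^j ≤ (n:ℝ)^j * q0^j := by
                  apply mul_le_mul_of_nonneg_right hch (by positivity)
              _ = ((n:ℝ)*q0)^j := by rw [mul_pow]
              _ ≤ (1/2:ℝ)^j := by
                  apply pow_le_pow_left₀ (by positivity) h2'
          · rw [if_neg hcj, mul_zero]
            by_cases h13 : 13 ≤ j
            · rw [if_pos h13]; positivity
            · rw [if_neg h13]
      _ ≤ (1/2:ℝ)^12 := geom_tail n
  -- ## extraction of a good graph
  have htotal : ∑ E ∈ (Bad1 ∪ Bad2 ∪ Bad3), wt U p E < 1 := by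
    have h12 := sum_union_le hwt0 Bad1 Bad2
    have h123 := sum_union_le hwt0 (Bad1 ∪ Bad2) Bad3
    have : ((1:ℝ)/2)^12 ≤ 0.001 := by norm_num
    linarith
  have hexists : ∃ E ∈ U.powerset, E ∉ Bad1 ∪ Bad2 ∪ Bad3 := by
    by_contra hcon
    push_neg at hcon
    have hsub : U.powerset ⊆ Bad1 ∪ Bad2 ∪ Bad3 := fun E hE => hcon E hE
    have := Finset.sum_le_sum_of_subset_of_nonneg hsub (fun E _ _ => hwt0 E)
    rw [sum_wt U p] at this
    linarith
  obtain ⟨E, hEpow, hEgood⟩ := hexists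
  have hEsub : E ⊆ U := Finset.mem_powerset.1 hEpow
  simp only [Finset.mem_union, not_or] at hEgood
  obtain ⟨⟨hg1, hg2⟩, hg3⟩ := hEgood
  refine ⟨G E, ?_, ?_, ?_⟩
  · -- average degree bound
    have hnotin : ¬ (((E ∩ U).card : ℝ) ≤ (U.card:ℝ) * p / 2) := by
      intro hcard
      exact hg3 (by rw [hBad3]; exact Finset.mem_filter.2 ⟨hEpow, hcard⟩)
    push_neg at hnotin
    rw [Finset.inter_eq_left.2 hEsub] at hnotin
    have hEcard : (U.card:ℝ) * p / 2 ≤ (E.card : ℝ) := le_of_lt hnotin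
    have hedge : (G E).edgeSet.ncard = E.card := global_edge_ncard E hEsub
    unfold avgDeg
    rw [hedge]
    rw [Nat.card_eq_fintype_card, Fintype.card_fin]
    rw [le_div_iff₀ (by positivity : (0:ℝ) < (n:ℝ))]
    rw [hUcard] at hEcard
    nlinarith [hEcard]
  · -- Kss free
    by_contra hcon
    exact hg1 (by rw [hBad1]; exact Finset.mem_filter.2 ⟨hEpow, hcon⟩)
  · -- C4-free induced subgraphs are sparse
    intro S hC4
    by_contra hcon
    push_neg at hcon
    exact hg2 (by rw [hBad2]; exact Finset.mem_filter.2 ⟨hEpow, ⟨S, hC4, hcon⟩⟩)
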